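/- arXiv:2011.10814 — 6 statements merged into one kernel-verified Lean document; each statement's English description precedes it below -/
import Mathlib

section
/- For a symmetric matrix P ∈ ℝ^{n×n} with 0 ≺ P ≺ γ²I and any y ∈ ℝ^n, the supremum over v ∈ ℝ^n of (vᵀPv − γ²|y − v|²) equals yᵀ(P⁻¹ − γ⁻²I)⁻¹y, and the supremum is attained. -/
open Matrix

theorem stmt0 (n : ℕ) (γ : ℝ) (hγ : 0 < γ)
    (P : Matrix (Fin n) (Fin n) ℝ) (hP : P.PosDef)
    (hPγ : (γ ^ 2 • (1 : Matrix (Fin n) (Fin n) ℝ) - P).PosDef)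
    (y : Fin n → ℝ) :
    IsGreatest
      (Set.range fun v : Fin n → ℝ =>
        v ⬝ᵥ (P *ᵥ v) - γ ^ 2 * ((y - v) ⬝ᵥ (y - v)))
      (y ⬝ᵥ ((P⁻¹ - (γ ^ 2)⁻¹ • (1 : Matrix (Fin n) (Fin n) ℝ))⁻¹ *ᵥ y)) := by
  set M : Matrix (Fin n) (Fin n) ℝ := γ ^ 2 • (1 : Matrix (Fin n) (Fin n) ℝ) - P with hMdef
  have hγ2 : (γ : ℝ) ^ 2 ≠ 0 := by positivity
  have hPdet : IsUnit P.det := hP.det_pos.ne'.isUnit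
  have hMdet : IsUnit M.det := hPγ.det_pos.ne'.isUnit
  have hPt : Pᵀ = P := (conjTranspose_eq_transpose_of_trivial P).symm.trans hP.isHermitian.eq
  -- key inverse identity
  have hK : (P⁻¹ - (γ ^ 2)⁻¹ • (1 : Matrix (Fin n) (Fin n) ℝ))⁻¹
      = γ ^ 2 • (P * M⁻¹) := by
    apply inv_eq_right_inv
    have h1 : P⁻¹ * (γ ^ 2 • (P * M⁻¹)) = γ ^ 2 • M⁻¹ := by
      rw [Matrix.mul_smul, ← Matrix.mul_assoc, P.nonsing_inv_mul hPdet, Matrix.one_mul]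
    have h2 : ((γ ^ 2)⁻¹ • (1 : Matrix (Fin n) (Fin n) ℝ)) * (γ ^ 2 • (P * M⁻¹))
        = P * M⁻¹ := by
      rw [Matrix.smul_mul, Matrix.one_mul, smul_smul, inv_mul_cancel₀ hγ2, one_smul]
    rw [Matrix.sub_mul, h1, h2]
    have : γ ^ 2 • M⁻¹ - P * M⁻¹ = M * M⁻¹ := by
      rw [hMdef, Matrix.sub_mul, Matrix.smul_mul, Matrix.one_mul]
    rw [this, M.mul_nonsing_inv hMdet]
  set w : Fin n → ℝ := M⁻¹ *ᵥ y with hwdef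
  have hy : y = M *ᵥ w := by
    rw [hwdef, mulVec_mulVec, M.mul_nonsing_inv hMdet, one_mulVec]
  have hMw : M *ᵥ w = γ ^ 2 • w - P *ᵥ w := by
    rw [hMdef, sub_mulVec, smul_mulVec, one_mulVec]
  have hyv : y = γ ^ 2 • w - P *ᵥ w := hy.trans hMw
  have hRHS : y ⬝ᵥ ((P⁻¹ - (γ ^ 2)⁻¹ • (1 : Matrix (Fin n) (Fin n) ℝ))⁻¹ *ᵥ y)
      = γ ^ 2 * ((γ ^ 2 • w - P *ᵥ w) ⬝ᵥ (P *ᵥ w)) := by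
    have h : (γ ^ 2 • (P * M⁻¹)) *ᵥ y = γ ^ 2 • (P *ᵥ w) := by
      rw [smul_mulVec, ← mulVec_mulVec, ← hwdef]
    rw [hK, h, dotProduct_smul, smul_eq_mul]
    rw [hyv]
  -- symmetry of P on dot products
  have hsym : ∀ a b : Fin n → ℝ, (P *ᵥ a) ⬝ᵥ b = a ⬝ᵥ (P *ᵥ b) := by
    intro a b
    rw [dotProduct_mulVec, ← hPt, vecMul_transpose, hPt]
  have c2 : ∀ v : Fin n → ℝ, w ⬝ᵥ (P *ᵥ v) = v ⬝ᵥ (P *ᵥ w) := by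
    intro v
    rw [← hsym w v, dotProduct_comm]
  constructor
  · refine ⟨γ ^ 2 • w, ?_⟩
    show (γ ^ 2 • w) ⬝ᵥ (P *ᵥ (γ ^ 2 • w))
        - γ ^ 2 * ((y - γ ^ 2 • w) ⬝ᵥ (y - γ ^ 2 • w)) = _
    have e2 : y - γ ^ 2 • w = -(P *ᵥ w) := by rw [hyv]; abel
    rw [hRHS, e2]
    simp only [mulVec_smul, smul_dotProduct, dotProduct_smul, neg_dotProduct, dotProduct_neg,
      neg_neg, sub_dotProduct, smul_eq_mul]
    ring
  · rintro x ⟨v, rfl⟩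
    show v ⬝ᵥ (P *ᵥ v) - γ ^ 2 * ((y - v) ⬝ᵥ (y - v)) ≤ _
    have hnn : 0 ≤ (v - γ ^ 2 • w) ⬝ᵥ (M *ᵥ (v - γ ^ 2 • w)) := by
      have := hPγ.posSemidef.re_dotProduct_nonneg (v - γ ^ 2 • w)
      simpa using this
    have key : γ ^ 2 * ((γ ^ 2 • w - P *ᵥ w) ⬝ᵥ (P *ᵥ w))
        - (v ⬝ᵥ (P *ᵥ v) - γ ^ 2 * (((γ ^ 2 • w - P *ᵥ w) - v) ⬝ᵥ ((γ ^ 2 • w - P *ᵥ w) - v)))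
        = (v - γ ^ 2 • w) ⬝ᵥ (M *ᵥ (v - γ ^ 2 • w)) := by
      have hMu : M *ᵥ (v - γ ^ 2 • w) = γ ^ 2 • (v - γ ^ 2 • w) - P *ᵥ (v - γ ^ 2 • w) := by
        rw [hMdef, sub_mulVec, smul_mulVec, one_mulVec]
      rw [hMu]
      have c1 : (P *ᵥ w) ⬝ᵥ v = v ⬝ᵥ (P *ᵥ w) := dotProduct_comm _ _
      have c3 : (P *ᵥ w) ⬝ᵥ w = w ⬝ᵥ (P *ᵥ w) := dotProduct_comm _ _
      have c4 : w ⬝ᵥ v = v ⬝ᵥ w := dotProduct_comm _ _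
      simp only [mulVec_sub, mulVec_smul, sub_dotProduct, dotProduct_sub, smul_dotProduct,
        dotProduct_smul, smul_eq_mul, c1, c2, c3, c4]
      ring
    rw [hRHS, hyv]
    linarith [key, hnn]
end

section
/- For a symmetric matrix T ∈ ℝ^{n×n} with 0 ≺ T ≺ γ²I and any y₁, y₂ ∈ ℝ^n, the supremum over v ∈ ℝ^n of (vᵀTv − (γ²/2)|y₁ − v|² − (γ²/2)|y₂ − v|²) equals ((y₁+y₂)/2)ᵀ(T⁻¹ − γ⁻²I)⁻¹((y₁+y₂)/2) − γ²|(y₁ − y₂)/2|². -/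
open Matrix

theorem stmt1 (n : ℕ) (γ : ℝ) (hγ : 0 < γ)
    (T : Matrix (Fin n) (Fin n) ℝ) (hT : T.PosDef)
    (hTγ : (γ ^ 2 • (1 : Matrix (Fin n) (Fin n) ℝ) - T).PosDef)
    (y₁ y₂ : Fin n → ℝ) :
    IsGreatest
      (Set.range fun v : Fin n → ℝ =>
        v ⬝ᵥ (T *ᵥ v) - γ ^ 2 / 2 * ((y₁ - v) ⬝ᵥ (y₁ - v))
          - γ ^ 2 / 2 * ((y₂ - v) ⬝ᵥ (y₂ - v)))
      (((1 / 2 : ℝ) • (y₁ + y₂)) ⬝ᵥ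
          ((T⁻¹ - (γ ^ 2)⁻¹ • (1 : Matrix (Fin n) (Fin n) ℝ))⁻¹ *ᵥ
            ((1 / 2 : ℝ) • (y₁ + y₂)))
        - γ ^ 2 * (((1 / 2 : ℝ) • (y₁ - y₂)) ⬝ᵥ ((1 / 2 : ℝ) • (y₁ - y₂)))) := by
  have hγ2 : (0:ℝ) < γ ^ 2 := by positivity
  set A : Matrix (Fin n) (Fin n) ℝ := γ ^ 2 • (1 : Matrix (Fin n) (Fin n) ℝ) - T with hAdef
  have hAu : IsUnit A.det := hTγ.det_pos.ne'.isUnit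
  have hTu : IsUnit T.det := hT.det_pos.ne'.isUnit
  have hAsym : Aᵀ = A := by
    have := hTγ.1; rw [Matrix.IsHermitian] at this; simpa using this
  set m : Fin n → ℝ := (1/2 : ℝ) • (y₁ + y₂) with hm
  set d : Fin n → ℝ := (1/2 : ℝ) • (y₁ - y₂) with hd
  set p : ℝ := m ⬝ᵥ (A⁻¹ *ᵥ m) with hp
  set v₀ : Fin n → ℝ := (γ^2 : ℝ) • (A⁻¹ *ᵥ m) with hv₀
  -- matrix identities
  have hTinvA : T⁻¹ * A = (γ^2:ℝ) • T⁻¹ - 1 := by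
    rw [hAdef, Matrix.mul_sub, Matrix.mul_smul, Matrix.mul_one, Matrix.nonsing_inv_mul T hTu]
  have hAinvT : A⁻¹ * T = (γ^2:ℝ) • A⁻¹ - 1 := by
    have hT' : T = γ^2 • (1 : Matrix (Fin n) (Fin n) ℝ) - A := (sub_sub_cancel _ _).symm
    rw [hT', Matrix.mul_sub, Matrix.mul_smul, Matrix.mul_one, Matrix.nonsing_inv_mul A hAu]
  have hfac : T⁻¹ - (γ ^ 2)⁻¹ • (1 : Matrix (Fin n) (Fin n) ℝ) = (γ^2:ℝ)⁻¹ • (T⁻¹ * A) := by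
    rw [hTinvA, smul_sub, smul_smul, inv_mul_cancel₀ hγ2.ne', one_smul]
  have hinv : (T⁻¹ - (γ ^ 2)⁻¹ • (1 : Matrix (Fin n) (Fin n) ℝ))⁻¹ = (γ^2:ℝ) • (A⁻¹ * T) := by
    apply Matrix.inv_eq_right_inv
    rw [hfac, Matrix.smul_mul, Matrix.mul_smul, smul_smul, inv_mul_cancel₀ hγ2.ne', one_smul]
    calc T⁻¹ * A * (A⁻¹ * T) = T⁻¹ * (A * A⁻¹) * T := by
          rw [Matrix.mul_assoc, Matrix.mul_assoc, Matrix.mul_assoc]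
      _ = 1 := by rw [Matrix.mul_nonsing_inv A hAu, Matrix.mul_one,
              Matrix.nonsing_inv_mul T hTu]
  -- symmetric dot products
  have hsymdot : ∀ x y : Fin n → ℝ, x ⬝ᵥ A *ᵥ y = y ⬝ᵥ A *ᵥ x := by
    intro x y
    calc x ⬝ᵥ A *ᵥ y = (x ᵥ* A) ⬝ᵥ y := dotProduct_mulVec x A y
      _ = (x ᵥ* Aᵀ) ⬝ᵥ y := by rw [hAsym]
      _ = (A *ᵥ x) ⬝ᵥ y := by rw [vecMul_transpose]
      _ = y ⬝ᵥ A *ᵥ x := dotProduct_comm _ _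
  have hAv₀ : A *ᵥ v₀ = (γ^2:ℝ) • m := by
    rw [hv₀, mulVec_smul, Matrix.mulVec_mulVec, Matrix.mul_nonsing_inv A hAu, one_mulVec]
  have hv₀Av₀ : v₀ ⬝ᵥ A *ᵥ v₀ = γ^4 * p := by
    rw [hAv₀, dotProduct_smul, hv₀, smul_dotProduct, hp, smul_eq_mul, smul_eq_mul,
      dotProduct_comm]
    ring
  have hv₀Av : ∀ v : Fin n → ℝ, v₀ ⬝ᵥ A *ᵥ v = γ^2 * (m ⬝ᵥ v) := by
    intro v
    rw [← hsymdot, hAv₀, dotProduct_smul, smul_eq_mul, dotProduct_comm]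
  have h1 : ∀ v : Fin n → ℝ, (v - v₀) ⬝ᵥ A *ᵥ (v - v₀)
      = v ⬝ᵥ A *ᵥ v - 2 * γ^2 * (m ⬝ᵥ v) + γ^4 * p := by
    intro v
    rw [Matrix.mulVec_sub, dotProduct_sub, sub_dotProduct, sub_dotProduct,
      hv₀Av₀, hv₀Av, hsymdot v v₀, hv₀Av]
    ring
  have h2 : ∀ v : Fin n → ℝ, v ⬝ᵥ A *ᵥ v = γ^2 * (v ⬝ᵥ v) - v ⬝ᵥ T *ᵥ v := by
    intro v
    rw [hAdef, sub_mulVec, smul_mulVec, one_mulVec, dotProduct_sub, dotProduct_smul,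
      smul_eq_mul]
  -- value of the stated supremum
  have hS : m ⬝ᵥ ((T⁻¹ - (γ ^ 2)⁻¹ • (1 : Matrix (Fin n) (Fin n) ℝ))⁻¹ *ᵥ m)
        - γ ^ 2 * (d ⬝ᵥ d)
      = γ^4 * p - γ^2 * (m ⬝ᵥ m) - γ^2 * (d ⬝ᵥ d) := by
    rw [hinv, hAinvT, smul_sub, smul_smul, sub_mulVec, smul_mulVec,
      smul_mulVec, one_mulVec, dotProduct_sub, dotProduct_smul, dotProduct_smul,
      hp, smul_eq_mul, smul_eq_mul]
    ring
  -- key pointwise identity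
  have hkey : ∀ v : Fin n → ℝ,
      v ⬝ᵥ (T *ᵥ v) - γ ^ 2 / 2 * ((y₁ - v) ⬝ᵥ (y₁ - v)) - γ ^ 2 / 2 * ((y₂ - v) ⬝ᵥ (y₂ - v))
        = (γ^4 * p - γ^2 * (m ⬝ᵥ m) - γ^2 * (d ⬝ᵥ d)) - ((v - v₀) ⬝ᵥ A *ᵥ (v - v₀)) := by
    intro v
    rw [h1 v, h2 v]
    have e1 : m ⬝ᵥ v = (1/2) * (y₁ ⬝ᵥ v) + (1/2) * (y₂ ⬝ᵥ v) := by
      rw [hm, smul_dotProduct, add_dotProduct, smul_eq_mul]; ring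
    have e2 : m ⬝ᵥ m = (1/4) * (y₁ ⬝ᵥ y₁) + (1/2) * (y₁ ⬝ᵥ y₂) + (1/4) * (y₂ ⬝ᵥ y₂) := by
      rw [hm, smul_dotProduct, dotProduct_smul, add_dotProduct, dotProduct_add,
        dotProduct_add, dotProduct_comm y₂ y₁, smul_eq_mul, smul_eq_mul]
      ring
    have e3 : d ⬝ᵥ d = (1/4) * (y₁ ⬝ᵥ y₁) - (1/2) * (y₁ ⬝ᵥ y₂) + (1/4) * (y₂ ⬝ᵥ y₂) := by
      rw [hd, smul_dotProduct, dotProduct_smul, sub_dotProduct, dotProduct_sub,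
        dotProduct_sub, dotProduct_comm y₂ y₁, smul_eq_mul, smul_eq_mul]
      ring
    have e4 : (y₁ - v) ⬝ᵥ (y₁ - v) = y₁ ⬝ᵥ y₁ - 2 * (y₁ ⬝ᵥ v) + v ⬝ᵥ v := by
      rw [sub_dotProduct, dotProduct_sub, dotProduct_sub, dotProduct_comm v y₁]; ring
    have e5 : (y₂ - v) ⬝ᵥ (y₂ - v) = y₂ ⬝ᵥ y₂ - 2 * (y₂ ⬝ᵥ v) + v ⬝ᵥ v := by
      rw [sub_dotProduct, dotProduct_sub, dotProduct_sub, dotProduct_comm v y₂]; ring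
    rw [e1, e2, e3, e4, e5]
    ring
  constructor
  · exact ⟨v₀, by dsimp only; rw [hkey v₀, hS]; simp⟩
  · rintro x ⟨v, rfl⟩
    dsimp only
    rw [hkey v, hS]
    have hnn : 0 ≤ (v - v₀) ⬝ᵥ A *ᵥ (v - v₀) := by
      simpa using hTγ.posSemidef.dotProduct_mulVec_nonneg (v - v₀)
    linarith
end

section
/- Let V₀(x, Z) = −γ² · min over (A,B) in a finite nonempty set 𝓜 of trace([I A B] Z [I A B]ᵀ), and define V₁(x, Z) = min_u max_v { xᵀQx + uᵀRu + V₀(v, Z + z zᵀ) } where z = (−v, x, u). If Q and R are positive semidefinite and Z is positive semidefinite, then V₁(x, Z) ≥ V₀(x, Z) for all x. -/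
open Matrix

lemma aux_trace {k l : Type*} [Fintype k] [Fintype l]
    (M : Matrix k l ℝ) (a : l → ℝ) :
    (M * vecMulVec a a * Mᵀ).trace = (M *ᵥ a) ⬝ᵥ (M *ᵥ a) := by
  simp only [trace, diag, mul_apply, vecMulVec_apply, transpose_apply, dotProduct, mulVec,
    dotProduct]
  rw [Finset.sum_congr rfl]
  intro i _
  rw [Finset.sum_mul]
  congr 1
  ext j
  rw [Finset.mul_sum, Finset.sum_mul]
  congr 1
  ext c
  ring

lemma aux_psd_trace {k l : Type*} [Fintype k] [Fintype l] [DecidableEq l]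
    (M : Matrix k l ℝ) {Z : Matrix l l ℝ} (hZ : Z.PosSemidef) :
    0 ≤ (M * Z * Mᵀ).trace := by
  have h : ∀ i, 0 ≤ (M * Z * Mᵀ) i i := by
    intro i
    have h2 := hZ.dotProduct_mulVec_nonneg (fun j => M i j)
    have h3 : (M * Z * Mᵀ) i i = star (fun j => M i j) ⬝ᵥ (Z *ᵥ fun j => M i j) := by
      simp only [mul_apply, transpose_apply, dotProduct, mulVec, dotProduct, Finset.sum_mul,
        star_trivial]
      rw [Finset.sum_comm]
      rw [Finset.sum_congr rfl]
      intro j _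
      rw [Finset.mul_sum]
      congr 1
      ext c
      ring
    rw [h3]
    exact h2
  exact Finset.sum_nonneg fun i _ => h i

theorem stmt5 (n m : ℕ) (γ : ℝ) (hγ : 0 < γ)
    (Q : Matrix (Fin n) (Fin n) ℝ) (R : Matrix (Fin m) (Fin m) ℝ)
    (hQ : Q.PosSemidef) (hR : R.PosSemidef)
    (M : Finset (Matrix (Fin n) (Fin n) ℝ × Matrix (Fin n) (Fin m) ℝ))
    (hM : M.Nonempty)
    (Z : Matrix (Fin n ⊕ (Fin n ⊕ Fin m)) (Fin n ⊕ (Fin n ⊕ Fin m)) ℝ)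
    (hZ : Z.PosSemidef) (x : Fin n → ℝ) :
    let blk := fun (p : Matrix (Fin n) (Fin n) ℝ × Matrix (Fin n) (Fin m) ℝ) =>
      Matrix.fromCols (1 : Matrix (Fin n) (Fin n) ℝ) (Matrix.fromCols p.1 p.2)
    let V₀ := fun (Z' : Matrix (Fin n ⊕ (Fin n ⊕ Fin m)) (Fin n ⊕ (Fin n ⊕ Fin m)) ℝ) =>
      -γ ^ 2 * M.inf' hM (fun p => (blk p * Z' * (blk p)ᵀ).trace)
    (⨅ u : Fin m → ℝ, ⨆ v : Fin n → ℝ,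
        (x ⬝ᵥ (Q *ᵥ x) + u ⬝ᵥ (R *ᵥ u) +
          V₀ (Z + vecMulVec (Sum.elim (-v) (Sum.elim x u)) (Sum.elim (-v) (Sum.elim x u)))))
      ≥ V₀ Z := by
  intro blk V₀
  have hγ2 : -γ ^ 2 ≤ 0 := by nlinarith
  -- decomposition of the trace
  have hdec : ∀ (p : Matrix (Fin n) (Fin n) ℝ × Matrix (Fin n) (Fin m) ℝ)
      (z : (Fin n ⊕ (Fin n ⊕ Fin m)) → ℝ),
      (blk p * (Z + vecMulVec z z) * (blk p)ᵀ).trace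
        = (blk p * Z * (blk p)ᵀ).trace + (blk p *ᵥ z) ⬝ᵥ (blk p *ᵥ z) := by
    intro p z
    rw [Matrix.mul_add, Matrix.add_mul, trace_add, aux_trace]
  have hmv : ∀ (p : Matrix (Fin n) (Fin n) ℝ × Matrix (Fin n) (Fin m) ℝ) (v : Fin n → ℝ)
      (u : Fin m → ℝ),
      blk p *ᵥ Sum.elim (-v) (Sum.elim x u) = -v + (p.1 *ᵥ x + p.2 *ᵥ u) := by
    intro p v u
    show fromCols 1 (fromCols p.1 p.2) *ᵥ _ = _
    rw [fromCols_mulVec_sumElim, fromCols_mulVec_sumElim, one_mulVec]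
  refine le_ciInf fun u => ?_
  obtain ⟨p₀, hp₀mem, hp₀⟩ := Finset.exists_mem_eq_inf' hM
    (fun p => (blk p * Z * (blk p)ᵀ).trace)
  -- boundedness of the sup
  have hbdd : BddAbove (Set.range fun v : Fin n → ℝ =>
      x ⬝ᵥ (Q *ᵥ x) + u ⬝ᵥ (R *ᵥ u) +
        V₀ (Z + vecMulVec (Sum.elim (-v) (Sum.elim x u)) (Sum.elim (-v) (Sum.elim x u)))) := by
    refine ⟨x ⬝ᵥ (Q *ᵥ x) + u ⬝ᵥ (R *ᵥ u) + V₀ Z, ?_⟩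
    rintro y ⟨v, rfl⟩
    dsimp only
    have h1 : M.inf' hM (fun p => (blk p * Z * (blk p)ᵀ).trace)
        ≤ M.inf' hM (fun p => (blk p *
            (Z + vecMulVec (Sum.elim (-v) (Sum.elim x u)) (Sum.elim (-v) (Sum.elim x u)))
            * (blk p)ᵀ).trace) := by
      refine Finset.le_inf' hM _ fun p hp => ?_
      rw [hdec]
      have := Finset.inf'_le (fun p => (blk p * Z * (blk p)ᵀ).trace) hp
      have h2 : 0 ≤ (blk p *ᵥ Sum.elim (-v) (Sum.elim x u)) ⬝ᵥ
          (blk p *ᵥ Sum.elim (-v) (Sum.elim x u)) := Finset.sum_nonneg fun i _ => mul_self_nonneg _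
      linarith
    have h3 : V₀ (Z + vecMulVec (Sum.elim (-v) (Sum.elim x u)) (Sum.elim (-v) (Sum.elim x u)))
        ≤ V₀ Z := by
      simp only [V₀]
      exact mul_le_mul_of_nonpos_left h1 hγ2
    linarith
  -- V₀ Z ≤ value at v := p₀.1 *ᵥ x + p₀.2 *ᵥ u
  set v₀ : Fin n → ℝ := p₀.1 *ᵥ x + p₀.2 *ᵥ u with hv₀
  refine le_trans ?_ (le_ciSup hbdd v₀)
  have hx : 0 ≤ x ⬝ᵥ (Q *ᵥ x) := by simpa using hQ.dotProduct_mulVec_nonneg x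
  have hu : 0 ≤ u ⬝ᵥ (R *ᵥ u) := by simpa using hR.dotProduct_mulVec_nonneg u
  have hz0 : blk p₀ *ᵥ Sum.elim (-v₀) (Sum.elim x u) = 0 := by
    rw [hmv]; rw [hv₀]; abel
  have h4 : M.inf' hM (fun p => (blk p *
      (Z + vecMulVec (Sum.elim (-v₀) (Sum.elim x u)) (Sum.elim (-v₀) (Sum.elim x u)))
      * (blk p)ᵀ).trace) ≤ M.inf' hM (fun p => (blk p * Z * (blk p)ᵀ).trace) := by
    refine le_trans (Finset.inf'_le _ hp₀mem) ?_
    rw [hdec, hz0, hp₀]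
    simp
  have h5 : V₀ Z ≤ V₀ (Z + vecMulVec (Sum.elim (-v₀) (Sum.elim x u))
      (Sum.elim (-v₀) (Sum.elim x u))) := mul_le_mul_of_nonpos_left h4 hγ2
  linarith
end

section
/- Suppose symmetric matrices P, T ∈ ℝ^{n×n}, K ∈ ℝ^{m×n}, positive definite Q ∈ ℝ^{n×n}, R ∈ ℝ^{m×m}, and γ > 0 satisfy 0 ≺ P ≺ T ≺ γ²I and P ⪰ Q + KᵀRK + (A − BK)ᵀ(P⁻¹ − γ⁻²I)⁻¹(A − BK). Then for all x ∈ ℝ^n and all w ∈ ℝ^n: |x|²_Q + |Kx|²_R − γ²|w|² + |(A − BK)x + w|²_P ≤ |x|²_P, i.e., the closed-loop H∞ dissipation inequality holds for the control u = −Kx applied to x⁺ = Ax + Bu + w. -/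
open Matrix

private lemma symm_dot {n : ℕ} {N : Matrix (Fin n) (Fin n) ℝ} (h : Nᵀ = N)
    (u v : Fin n → ℝ) : u ⬝ᵥ (N *ᵥ v) = v ⬝ᵥ (N *ᵥ u) := by
  rw [dotProduct_mulVec, ← mulVec_transpose, h, dotProduct_comm]

theorem stmt9 (n m : ℕ) (γ : ℝ) (hγ : 0 < γ)
    (A : Matrix (Fin n) (Fin n) ℝ) (B : Matrix (Fin n) (Fin m) ℝ)
    (K : Matrix (Fin m) (Fin n) ℝ)
    (P T : Matrix (Fin n) (Fin n) ℝ)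
    (Q : Matrix (Fin n) (Fin n) ℝ) (R : Matrix (Fin m) (Fin m) ℝ)
    (hQ : Q.PosDef) (hR : R.PosDef)
    (hP : P.PosDef) (hPT : (T - P).PosDef)
    (hTγ : (γ ^ 2 • (1 : Matrix (Fin n) (Fin n) ℝ) - T).PosDef)
    (hRic : (P - (Q + Kᵀ * R * K +
        (A - B * K)ᵀ *
          (P⁻¹ - (γ ^ 2)⁻¹ • (1 : Matrix (Fin n) (Fin n) ℝ))⁻¹ *
          (A - B * K))).PosSemidef) :
    ∀ (x w : Fin n → ℝ),
      x ⬝ᵥ (Q *ᵥ x) + (K *ᵥ x) ⬝ᵥ (R *ᵥ (K *ᵥ x)) - γ ^ 2 * (w ⬝ᵥ w) +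
          ((A - B * K) *ᵥ x + w) ⬝ᵥ (P *ᵥ ((A - B * K) *ᵥ x + w))
        ≤ x ⬝ᵥ (P *ᵥ x) := by
  intro x w
  have hγ2 : (γ : ℝ) ^ 2 ≠ 0 := by positivity
  set M : Matrix (Fin n) (Fin n) ℝ := γ ^ 2 • (1 : Matrix (Fin n) (Fin n) ℝ) - P with hMdef
  have hM : M.PosDef := by
    have hsum : M = (γ ^ 2 • (1 : Matrix (Fin n) (Fin n) ℝ) - T) + (T - P) := by
      rw [hMdef]; abel
    rw [hsum]; exact hTγ.add hPT
  have hMdet : IsUnit M.det := hM.det_pos.ne'.isUnit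
  have hPdet : IsUnit P.det := hP.det_pos.ne'.isUnit
  have hMM : M * M⁻¹ = 1 := mul_nonsing_inv M hMdet
  have hMM' : M⁻¹ * M = 1 := nonsing_inv_mul M hMdet
  have hPP' : P⁻¹ * P = 1 := nonsing_inv_mul P hPdet
  have hPsymm : Pᵀ = P := by
    rw [← conjTranspose_eq_transpose_of_trivial]; exact hP.isHermitian
  have hMsymm : Mᵀ = M := by
    rw [← conjTranspose_eq_transpose_of_trivial]; exact hM.isHermitian
  have hMinvsymm : (M⁻¹)ᵀ = M⁻¹ := by
    rw [← conjTranspose_eq_transpose_of_trivial]; exact hM.isHermitian.inv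
  -- S = P + P M⁻¹ P
  have hkey : (1 : Matrix (Fin n) (Fin n) ℝ) - (γ ^ 2)⁻¹ • P = (γ ^ 2)⁻¹ • M := by
    rw [hMdef, smul_sub, smul_smul, inv_mul_cancel₀ hγ2, one_smul]
  have hS : (P⁻¹ - (γ ^ 2)⁻¹ • (1 : Matrix (Fin n) (Fin n) ℝ))⁻¹
      = P + P * M⁻¹ * P := by
    apply inv_eq_right_inv
    have expand : (P⁻¹ - (γ ^ 2)⁻¹ • (1 : Matrix (Fin n) (Fin n) ℝ)) * (P + P * M⁻¹ * P)
        = 1 + ((1 : Matrix (Fin n) (Fin n) ℝ) - (γ ^ 2)⁻¹ • P) * (M⁻¹ * P)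
            - (γ ^ 2)⁻¹ • P := by
      simp only [Matrix.sub_mul, Matrix.mul_add, Matrix.smul_mul, Matrix.one_mul,
        Matrix.add_mul, ← Matrix.mul_assoc, hPP']
      abel
    rw [expand, hkey, smul_mul_assoc, ← Matrix.mul_assoc, hMM, Matrix.one_mul]
    abel
  set C : Matrix (Fin n) (Fin n) ℝ := A - B * K with hC
  set y : Fin n → ℝ := C *ᵥ x with hy
  set z : Fin n → ℝ := M⁻¹ *ᵥ (P *ᵥ y) with hz
  -- Riccati part
  have hric := hRic.dotProduct_mulVec_nonneg x
  have hric' : x ⬝ᵥ (Q *ᵥ x) + (K *ᵥ x) ⬝ᵥ (R *ᵥ (K *ᵥ x))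
      + y ⬝ᵥ (P *ᵥ y) + y ⬝ᵥ (P *ᵥ z) ≤ x ⬝ᵥ (P *ᵥ x) := by
    have e1 : x ⬝ᵥ ((Kᵀ * R * K) *ᵥ x) = (K *ᵥ x) ⬝ᵥ (R *ᵥ (K *ᵥ x)) := by
      rw [← mulVec_mulVec, ← mulVec_mulVec, dotProduct_mulVec, ← mulVec_transpose,
        transpose_transpose, dotProduct_comm]
    have e2 : x ⬝ᵥ ((Cᵀ * (P + P * M⁻¹ * P) * C) *ᵥ x)
        = y ⬝ᵥ (P *ᵥ y) + y ⬝ᵥ (P *ᵥ z) := by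
      rw [← mulVec_mulVec, ← mulVec_mulVec, dotProduct_mulVec, ← mulVec_transpose,
        transpose_transpose, ← hy, dotProduct_comm, add_mulVec, add_dotProduct,
        ← mulVec_mulVec, ← mulVec_mulVec, ← hz, dotProduct_comm (P *ᵥ y) y,
        dotProduct_comm (P *ᵥ z) y]
    rw [star_trivial, sub_mulVec, dotProduct_sub, add_mulVec, add_mulVec,
      dotProduct_add, dotProduct_add, hS, e1, e2] at hric
    linarith
  -- completion of squares part
  have hMz : M *ᵥ z = P *ᵥ y := by
    rw [hz, mulVec_mulVec, hMM, one_mulVec]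
  have hsq : (0:ℝ) ≤ (w - z) ⬝ᵥ (M *ᵥ (w - z)) := by
    simpa [star_trivial] using hM.posSemidef.dotProduct_mulVec_nonneg (w - z)
  have expand2 : (w - z) ⬝ᵥ (M *ᵥ (w - z))
      = γ ^ 2 * (w ⬝ᵥ w) - w ⬝ᵥ (P *ᵥ w) - 2 * (w ⬝ᵥ (P *ᵥ y)) + y ⬝ᵥ (P *ᵥ z) := by
    rw [mulVec_sub, dotProduct_sub, sub_dotProduct, sub_dotProduct, hMz]
    have h1 : w ⬝ᵥ (M *ᵥ w) = γ ^ 2 * (w ⬝ᵥ w) - w ⬝ᵥ (P *ᵥ w) := by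
      rw [hMdef, sub_mulVec, dotProduct_sub, smul_mulVec, one_mulVec,
        dotProduct_smul, smul_eq_mul]
    have h2 : z ⬝ᵥ (M *ᵥ w) = w ⬝ᵥ (P *ᵥ y) := by
      rw [symm_dot hMsymm, hMz]
    have h3 : z ⬝ᵥ (P *ᵥ y) = y ⬝ᵥ (P *ᵥ z) := symm_dot hPsymm z y
    rw [h1, h2, h3]; ring
  have hPsym_yw : y ⬝ᵥ (P *ᵥ w) = w ⬝ᵥ (P *ᵥ y) := symm_dot hPsymm y w
  have expand3 : (y + w) ⬝ᵥ (P *ᵥ (y + w))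
      = y ⬝ᵥ (P *ᵥ y) + 2 * (w ⬝ᵥ (P *ᵥ y)) + w ⬝ᵥ (P *ᵥ w) := by
    simp only [mulVec_add, dotProduct_add, add_dotProduct, hPsym_yw]
    ring
  have := hric'
  rw [← hC, ← hy] at *
  linarith [hsq, hric', expand2, expand3]
end

section
/- Let P_{ij} ∈ ℝ^{n×n} be symmetric with 0 ≺ P_{ij} ≺ γ²I, let A_i, A_j ∈ ℝ^{n×n}, B_i, B_j ∈ ℝ^{n×m}, u ∈ ℝ^m, x ∈ ℝ^n. Then max over v ∈ ℝ^n of { |v|²_{P_{ij}} − (γ²/2)|A_ix + B_iu − v|² − (γ²/2)|A_jx + B_ju − v|² } = |((A_i + A_j)x + (B_i + B_j)u)/2|²_{(P_{ij}⁻¹ − γ⁻²I)⁻¹} − γ²|((A_i − A_j)x + (B_i − B_j)u)/2|². -/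
open Matrix

private lemma dotSymm {n : ℕ} {M : Matrix (Fin n) (Fin n) ℝ} (hM : Mᵀ = M) (u w : Fin n → ℝ) :
    u ⬝ᵥ (M *ᵥ w) = w ⬝ᵥ (M *ᵥ u) := by
  rw [dotProduct_mulVec, ← mulVec_transpose, hM, dotProduct_comm]

theorem stmt13 (n m : ℕ) (γ : ℝ) (hγ : 0 < γ)
    (Pij : Matrix (Fin n) (Fin n) ℝ) (hP : Pij.PosDef)
    (hPγ : (γ ^ 2 • (1 : Matrix (Fin n) (Fin n) ℝ) - Pij).PosDef)
    (Ai Aj : Matrix (Fin n) (Fin n) ℝ) (Bi Bj : Matrix (Fin n) (Fin m) ℝ)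
    (x : Fin n → ℝ) (u : Fin m → ℝ) :
    IsGreatest
      (Set.range fun v : Fin n → ℝ =>
        v ⬝ᵥ (Pij *ᵥ v)
          - γ ^ 2 / 2 * ((Ai *ᵥ x + Bi *ᵥ u - v) ⬝ᵥ (Ai *ᵥ x + Bi *ᵥ u - v))
          - γ ^ 2 / 2 * ((Aj *ᵥ x + Bj *ᵥ u - v) ⬝ᵥ (Aj *ᵥ x + Bj *ᵥ u - v)))
      (((1 / 2 : ℝ) • ((Ai + Aj) *ᵥ x + (Bi + Bj) *ᵥ u)) ⬝ᵥ
          ((Pij⁻¹ - (γ ^ 2)⁻¹ • (1 : Matrix (Fin n) (Fin n) ℝ))⁻¹ *ᵥ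
            ((1 / 2 : ℝ) • ((Ai + Aj) *ᵥ x + (Bi + Bj) *ᵥ u)))
        - γ ^ 2 * (((1 / 2 : ℝ) • ((Ai - Aj) *ᵥ x + (Bi - Bj) *ᵥ u)) ⬝ᵥ
            ((1 / 2 : ℝ) • ((Ai - Aj) *ᵥ x + (Bi - Bj) *ᵥ u)))) := by
  set y1 : Fin n → ℝ := Ai *ᵥ x + Bi *ᵥ u with hy1
  set y2 : Fin n → ℝ := Aj *ᵥ x + Bj *ᵥ u with hy2
  have hsum : (Ai + Aj) *ᵥ x + (Bi + Bj) *ᵥ u = y1 + y2 := by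
    simp only [hy1, hy2, add_mulVec]; abel
  have hdiff : (Ai - Aj) *ᵥ x + (Bi - Bj) *ᵥ u = y1 - y2 := by
    simp only [hy1, hy2, sub_mulVec]; abel
  rw [hsum, hdiff]
  set s : Fin n → ℝ := (1 / 2 : ℝ) • (y1 + y2) with hs
  set d : Fin n → ℝ := (1 / 2 : ℝ) • (y1 - y2) with hd
  set Q : Matrix (Fin n) (Fin n) ℝ := γ ^ 2 • 1 - Pij with hQ
  have hQpd : Q.PosDef := hPγ
  have hγ2 : (γ ^ 2 : ℝ) ≠ 0 := by positivity
  have hQdet : IsUnit Q.det := (Matrix.isUnit_iff_isUnit_det Q).1 hQpd.isUnit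
  have hPdet : IsUnit Pij.det := (Matrix.isUnit_iff_isUnit_det Pij).1 hP.isUnit
  have hQQi : Q * Q⁻¹ = 1 := Matrix.mul_nonsing_inv Q hQdet
  have hQiQ : Q⁻¹ * Q = 1 := Matrix.nonsing_inv_mul Q hQdet
  have hPiP : Pij⁻¹ * Pij = 1 := Matrix.nonsing_inv_mul Pij hPdet
  have hQsym : Qᵀ = Q := by have := hQpd.isHermitian; simpa [Matrix.IsHermitian] using this
  have hQisym : (Q⁻¹)ᵀ = Q⁻¹ := by rw [Matrix.transpose_nonsing_inv, hQsym]
  -- the key matrix identity for the stated value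
  have hR : (Pij⁻¹ - (γ ^ 2)⁻¹ • (1 : Matrix (Fin n) (Fin n) ℝ))⁻¹ = γ ^ 2 • (Q⁻¹ * Pij) := by
    apply Matrix.inv_eq_right_inv
    have h1 : Pij⁻¹ - (γ ^ 2)⁻¹ • (1 : Matrix (Fin n) (Fin n) ℝ)
        = (γ ^ 2)⁻¹ • (Pij⁻¹ * Q) := by
      rw [hQ, Matrix.mul_sub, Matrix.mul_smul, Matrix.mul_one, smul_sub, smul_smul,
        inv_mul_cancel₀ hγ2, one_smul, hPiP]
    rw [h1, smul_mul_assoc, Matrix.mul_smul, smul_smul, inv_mul_cancel₀ hγ2, one_smul,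
      Matrix.mul_assoc, ← Matrix.mul_assoc Q, hQQi, Matrix.one_mul, hPiP]
  have hQiP : Q⁻¹ * Pij = γ ^ 2 • Q⁻¹ - 1 := by
    have hPd : Pij = γ ^ 2 • 1 - Q := by rw [hQ]; abel
    rw [hPd, Matrix.mul_sub, Matrix.mul_smul, Matrix.mul_one, hQiQ]
  -- the stated value in convenient form
  have hM : (s ⬝ᵥ ((Pij⁻¹ - (γ ^ 2)⁻¹ • (1 : Matrix (Fin n) (Fin n) ℝ))⁻¹ *ᵥ s)
      - γ ^ 2 * (d ⬝ᵥ d))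
      = γ ^ 2 * (γ ^ 2 * (s ⬝ᵥ (Q⁻¹ *ᵥ s))) - γ ^ 2 * (s ⬝ᵥ s) - γ ^ 2 * (d ⬝ᵥ d) := by
    rw [hR, hQiP]
    simp only [Matrix.smul_mulVec, Matrix.sub_mulVec, Matrix.one_mulVec,
      dotProduct_smul, dotProduct_sub, smul_eq_mul]
    ring
  set vs : Fin n → ℝ := γ ^ 2 • (Q⁻¹ *ᵥ s) with hvs
  have hQvs : Q *ᵥ vs = γ ^ 2 • s := by
    rw [hvs, Matrix.mulVec_smul, Matrix.mulVec_mulVec, hQQi, Matrix.one_mulVec]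
  -- key pointwise identity
  have key : ∀ v : Fin n → ℝ,
      v ⬝ᵥ (Pij *ᵥ v) - γ ^ 2 / 2 * ((y1 - v) ⬝ᵥ (y1 - v))
          - γ ^ 2 / 2 * ((y2 - v) ⬝ᵥ (y2 - v))
        = (s ⬝ᵥ ((Pij⁻¹ - (γ ^ 2)⁻¹ • (1 : Matrix (Fin n) (Fin n) ℝ))⁻¹ *ᵥ s)
            - γ ^ 2 * (d ⬝ᵥ d))
          - (v - vs) ⬝ᵥ (Q *ᵥ (v - vs)) := by
    intro v
    rw [hM]
    have e1 : (v - vs) ⬝ᵥ (Q *ᵥ (v - vs))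
        = v ⬝ᵥ (Q *ᵥ v) - 2 * (γ ^ 2 * (v ⬝ᵥ s)) + γ ^ 2 * (γ ^ 2 * (s ⬝ᵥ (Q⁻¹ *ᵥ s))) := by
      have c1 : vs ⬝ᵥ (Q *ᵥ v) = v ⬝ᵥ (Q *ᵥ vs) := dotSymm hQsym vs v
      have c2 : v ⬝ᵥ (Q *ᵥ vs) = γ ^ 2 * (v ⬝ᵥ s) := by
        rw [hQvs, dotProduct_smul, smul_eq_mul]
      have c3 : vs ⬝ᵥ (Q *ᵥ vs) = γ ^ 2 * (γ ^ 2 * (s ⬝ᵥ (Q⁻¹ *ᵥ s))) := by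
        rw [hQvs, dotProduct_smul, hvs, smul_dotProduct, smul_eq_mul, smul_eq_mul,
          dotProduct_comm]
      rw [Matrix.mulVec_sub, dotProduct_sub, sub_dotProduct, sub_dotProduct, c1, c2, c3]
      ring
    rw [e1]
    have e2 : v ⬝ᵥ (Q *ᵥ v) = γ ^ 2 * (v ⬝ᵥ v) - v ⬝ᵥ (Pij *ᵥ v) := by
      rw [hQ, Matrix.sub_mulVec, Matrix.smul_mulVec, Matrix.one_mulVec,
        dotProduct_sub, dotProduct_smul, smul_eq_mul]
    rw [e2]
    simp only [hs, hd, dotProduct_smul, smul_dotProduct, smul_eq_mul, dotProduct_sub,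
      sub_dotProduct, dotProduct_add, add_dotProduct]
    rw [dotProduct_comm y2 y1, dotProduct_comm y1 v, dotProduct_comm y2 v]
    ring
  constructor
  · exact ⟨vs, by beta_reduce; rw [key vs]; simp⟩
  · rintro z ⟨v, rfl⟩
    beta_reduce
    rw [key v]
    have hnn : 0 ≤ (v - vs) ⬝ᵥ (Q *ᵥ (v - vs)) := by
      have := hQpd.posSemidef.dotProduct_mulVec_nonneg (v - vs); simpa using this
    linarith
end

section
/- Suppose for each k ∈ {1,…,N} the N² inequalities (for all x, i, j): |x|²_{P_{ik}} ≥ |x|²_Q + |K_k x|²_R + |(A_i − B_iK_k + A_j − B_jK_k)x/2|²_{(P_{ij}⁻¹−γ⁻²I)⁻¹} − γ²|(A_i − B_iK_k − A_j + B_jK_k)x/2|² hold, with 0 ≺ P_{ij} ≺ γ²I. Define z_i := γ² trace([I A_i B_i] Z [I A_i B_i]ᵀ) for a positive semidefinite Z, V^{ij}(x,Z) := |x|²_{P_{ij}} − (z_i + z_j)/2, and let k := argmin_i z_i. Then for all i, j and all x: max_v { |x|²_Q + |K_kx|²_R + V^{ij}(v, Z + zzᵀ) } ≤ V^{ik}(x,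 Z), where z = (−v, x, −K_kx). -/
open Matrix

-- sandwiched rank-one trace
lemma trace_sandwich {p q : Type*} [Fintype p] [Fintype q] (C : Matrix p q ℝ) (u : q → ℝ) :
    (C * vecMulVec u u * Cᵀ).trace = (C *ᵥ u) ⬝ᵥ (C *ᵥ u) := by
  rw [vecMulVec_eq Unit, ← Matrix.mul_assoc, Matrix.mul_assoc (C * replicateCol Unit u),
    ← replicateCol_mulVec, ← replicateRow_vecMul, vecMul_transpose, trace_replicateCol_mul_replicateRow]

lemma inv_identity {n : ℕ} (γ : ℝ) (hγ : 0 < γ) (P : Matrix (Fin n) (Fin n) ℝ)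
    (hP : P.PosDef) (hM : (γ ^ 2 • (1 : Matrix (Fin n) (Fin n) ℝ) - P).PosDef) :
    (P⁻¹ - (γ ^ 2)⁻¹ • (1 : Matrix (Fin n) (Fin n) ℝ))⁻¹
      = (γ ^ 2) ^ 2 • (γ ^ 2 • (1 : Matrix (Fin n) (Fin n) ℝ) - P)⁻¹
        - γ ^ 2 • (1 : Matrix (Fin n) (Fin n) ℝ) := by
  set M := γ ^ 2 • (1 : Matrix (Fin n) (Fin n) ℝ) - P with hMdef
  have hγ2 : (γ ^ 2 : ℝ) ≠ 0 := by positivity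
  have h1 : P⁻¹ * P = 1 := nonsing_inv_mul _ hP.det_pos.ne'.isUnit
  have h2 : M * M⁻¹ = 1 := mul_nonsing_inv _ hM.det_pos.ne'.isUnit
  apply inv_eq_right_inv
  have hMP : M + P = γ ^ 2 • (1 : Matrix (Fin n) (Fin n) ℝ) := by
    rw [hMdef]; abel
  have key : γ ^ 2 • (P⁻¹ * M⁻¹) = P⁻¹ + M⁻¹ := by
    have : P⁻¹ * (M + P) * M⁻¹ = P⁻¹ + M⁻¹ := by
      rw [Matrix.mul_add, Matrix.add_mul, Matrix.mul_assoc _ M M⁻¹, h2, h1,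
        Matrix.mul_one, Matrix.one_mul]
    rw [← this, hMP]
    rw [Matrix.mul_smul, Matrix.mul_one, Matrix.smul_mul]
  have expand : (P⁻¹ - (γ ^ 2)⁻¹ • (1 : Matrix (Fin n) (Fin n) ℝ)) *
      ((γ ^ 2) ^ 2 • M⁻¹ - γ ^ 2 • (1 : Matrix (Fin n) (Fin n) ℝ))
      = (γ ^ 2) ^ 2 • (P⁻¹ * M⁻¹) - γ ^ 2 • P⁻¹ - γ ^ 2 • M⁻¹ + 1 := by
    simp only [Matrix.sub_mul, Matrix.mul_sub, Matrix.smul_mul, Matrix.mul_smul,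
      Matrix.one_mul, Matrix.mul_one, smul_smul, smul_sub]
    rw [show (γ ^ 2) ^ 2 * (γ ^ 2)⁻¹ = γ ^ 2 by field_simp,
      show γ ^ 2 * (γ ^ 2)⁻¹ = 1 by field_simp]
    rw [one_smul]
    abel
  rw [expand, show ((γ ^ 2) ^ 2 : ℝ) • (P⁻¹ * M⁻¹) = γ ^ 2 • (γ ^ 2 • (P⁻¹ * M⁻¹)) by
    rw [smul_smul]; ring_nf, key, smul_add]
  abel

lemma quadmax {n : ℕ} (γ : ℝ) (hγ : 0 < γ) (P : Matrix (Fin n) (Fin n) ℝ)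
    (hP : P.PosDef) (hM : (γ ^ 2 • (1 : Matrix (Fin n) (Fin n) ℝ) - P).PosDef)
    (s v : Fin n → ℝ) :
    v ⬝ᵥ (P *ᵥ v) - γ ^ 2 * ((s - v) ⬝ᵥ (s - v))
      ≤ s ⬝ᵥ ((P⁻¹ - (γ ^ 2)⁻¹ • (1 : Matrix (Fin n) (Fin n) ℝ))⁻¹ *ᵥ s) := by
  set M := γ ^ 2 • (1 : Matrix (Fin n) (Fin n) ℝ) - P with hMdef
  have h2 : M * M⁻¹ = 1 := mul_nonsing_inv _ hM.det_pos.ne'.isUnit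
  have hsym : Mᵀ = M := by
    have := hM.1.eq
    rwa [conjTranspose_eq_transpose_of_trivial] at this
  rw [inv_identity γ hγ P hP hM, ← hMdef]
  have hrhs : s ⬝ᵥ (((γ ^ 2) ^ 2 • M⁻¹ - γ ^ 2 • (1 : Matrix (Fin n) (Fin n) ℝ)) *ᵥ s)
      = (γ ^ 2) ^ 2 * (s ⬝ᵥ (M⁻¹ *ᵥ s)) - γ ^ 2 * (s ⬝ᵥ s) := by
    rw [sub_mulVec, smul_mulVec, smul_mulVec, one_mulVec, dotProduct_sub,
      dotProduct_smul, dotProduct_smul, smul_eq_mul, smul_eq_mul]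
  rw [hrhs]
  set w := v - γ ^ 2 • (M⁻¹ *ᵥ s) with hwdef
  have h0 : 0 ≤ w ⬝ᵥ (M *ᵥ w) := by
    simpa using hM.posSemidef.re_dotProduct_nonneg w
  have hMw : M *ᵥ w = M *ᵥ v - γ ^ 2 • s := by
    rw [hwdef, mulVec_sub, mulVec_smul, mulVec_mulVec, h2, one_mulVec]
  have hexp : w ⬝ᵥ (M *ᵥ w)
      = v ⬝ᵥ (M *ᵥ v) - 2 * γ ^ 2 * (s ⬝ᵥ v) + (γ ^ 2) ^ 2 * (s ⬝ᵥ (M⁻¹ *ᵥ s)) := by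
    have e1 : (M⁻¹ *ᵥ s) ⬝ᵥ (M *ᵥ v) = s ⬝ᵥ v := by
      rw [dotProduct_mulVec, ← mulVec_transpose, hsym, mulVec_mulVec, h2, one_mulVec]
    have e2 : (M⁻¹ *ᵥ s) ⬝ᵥ s = s ⬝ᵥ (M⁻¹ *ᵥ s) := dotProduct_comm _ _
    have e3 : v ⬝ᵥ s = s ⬝ᵥ v := dotProduct_comm _ _
    rw [hMw, hwdef]
    simp only [sub_dotProduct, dotProduct_sub, smul_dotProduct, dotProduct_smul,
      smul_eq_mul, e1, e2, e3]
    ring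
  have hMv : v ⬝ᵥ (M *ᵥ v) = γ ^ 2 * (v ⬝ᵥ v) - v ⬝ᵥ (P *ᵥ v) := by
    rw [hMdef, sub_mulVec, smul_mulVec, one_mulVec, dotProduct_sub, dotProduct_smul,
      smul_eq_mul]
  have hsv : (s - v) ⬝ᵥ (s - v) = s ⬝ᵥ s - 2 * (s ⬝ᵥ v) + v ⬝ᵥ v := by
    rw [sub_dotProduct, dotProduct_sub, dotProduct_sub]
    rw [dotProduct_comm v s]
    ring
  rw [hsv]
  nlinarith [h0, hexp, hMv]

theorem stmt14 (n m N : ℕ) (γ : ℝ) (hγ : 0 < γ)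
    (A : Fin N → Matrix (Fin n) (Fin n) ℝ) (B : Fin N → Matrix (Fin n) (Fin m) ℝ)
    (K : Fin N → Matrix (Fin m) (Fin n) ℝ)
    (P : Fin N → Fin N → Matrix (Fin n) (Fin n) ℝ)
    (Q : Matrix (Fin n) (Fin n) ℝ) (R : Matrix (Fin m) (Fin m) ℝ)
    (hQ : Q.PosDef) (hR : R.PosDef)
    (hP : ∀ i j, (P i j).PosDef)
    (hPγ : ∀ i j, (γ ^ 2 • (1 : Matrix (Fin n) (Fin n) ℝ) - P i j).PosDef)
    (hPik : ∀ (i j k : Fin N) (x : Fin n → ℝ),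
      x ⬝ᵥ (P i k *ᵥ x) ≥
        x ⬝ᵥ (Q *ᵥ x) + (K k *ᵥ x) ⬝ᵥ (R *ᵥ (K k *ᵥ x)) +
          ((1 / 2 : ℝ) • ((A i - B i * K k + A j - B j * K k) *ᵥ x)) ⬝ᵥ
            (((P i j)⁻¹ - (γ ^ 2)⁻¹ • (1 : Matrix (Fin n) (Fin n) ℝ))⁻¹ *ᵥ
              ((1 / 2 : ℝ) • ((A i - B i * K k + A j - B j * K k) *ᵥ x))) -
          γ ^ 2 * (((1 / 2 : ℝ) • ((A i - B i * K k - A j + B j * K k) *ᵥ x)) ⬝ᵥ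
            ((1 / 2 : ℝ) • ((A i - B i * K k - A j + B j * K k) *ᵥ x))))
    (Z : Matrix (Fin n ⊕ (Fin n ⊕ Fin m)) (Fin n ⊕ (Fin n ⊕ Fin m)) ℝ)
    (hZ : Z.PosSemidef) (k : Fin N) :
    let blk := fun (i : Fin N) => Matrix.fromCols (1 : Matrix (Fin n) (Fin n) ℝ) (Matrix.fromCols (A i) (B i))
    let zc := fun (i : Fin N)
        (W : Matrix (Fin n ⊕ (Fin n ⊕ Fin m)) (Fin n ⊕ (Fin n ⊕ Fin m)) ℝ) =>
      γ ^ 2 * (blk i * W * (blk i)ᵀ).trace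
    let V := fun (i j : Fin N) (x : Fin n → ℝ)
        (W : Matrix (Fin n ⊕ (Fin n ⊕ Fin m)) (Fin n ⊕ (Fin n ⊕ Fin m)) ℝ) =>
      x ⬝ᵥ (P i j *ᵥ x) - (zc i W + zc j W) / 2
    (∀ i, zc k Z ≤ zc i Z) →
      ∀ (i j : Fin N) (x : Fin n → ℝ) (v : Fin n → ℝ),
        x ⬝ᵥ (Q *ᵥ x) + (K k *ᵥ x) ⬝ᵥ (R *ᵥ (K k *ᵥ x)) +
            V i j v (Z + vecMulVec (Sum.elim (-v) (Sum.elim x (-(K k *ᵥ x))))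
              (Sum.elim (-v) (Sum.elim x (-(K k *ᵥ x)))))
          ≤ V i k x Z := by
  intro blk zc V hmin i j x v
  simp only [V, zc, blk] at hmin ⊢
  set u : Fin n ⊕ (Fin n ⊕ Fin m) → ℝ := Sum.elim (-v) (Sum.elim x (-(K k *ᵥ x))) with hu
  set wi : Fin n → ℝ := (A i - B i * K k) *ᵥ x with hwi
  set wj : Fin n → ℝ := (A j - B j * K k) *ᵥ x with hwj
  have hblkmul : ∀ (l : Fin N),
      Matrix.fromCols 1 (Matrix.fromCols (A l) (B l)) *ᵥ u
        = (A l - B l * K k) *ᵥ x - v := by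
    intro l
    rw [hu, fromCols_mulVec_sumElim, fromCols_mulVec_sumElim, one_mulVec,
      sub_mulVec, ← mulVec_mulVec, mulVec_neg]
    abel
  have hz : ∀ (l : Fin N),
      γ ^ 2 * (Matrix.fromCols (1 : Matrix (Fin n) (Fin n) ℝ) (Matrix.fromCols (A l) (B l)) * (Z + vecMulVec u u) *
          (Matrix.fromCols (1 : Matrix (Fin n) (Fin n) ℝ) (Matrix.fromCols (A l) (B l)))ᵀ).trace
        = γ ^ 2 * (Matrix.fromCols (1 : Matrix (Fin n) (Fin n) ℝ) (Matrix.fromCols (A l) (B l)) * Z *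
            (Matrix.fromCols (1 : Matrix (Fin n) (Fin n) ℝ) (Matrix.fromCols (A l) (B l)))ᵀ).trace
          + γ ^ 2 * (((A l - B l * K k) *ᵥ x - v) ⬝ᵥ ((A l - B l * K k) *ᵥ x - v)) := by
    intro l
    rw [Matrix.mul_add, Matrix.add_mul, trace_add, trace_sandwich, hblkmul l, mul_add]
  rw [hz i, hz j]
  set si : Fin n → ℝ := (1 / 2 : ℝ) • (wi + wj) with hsi
  set di : Fin n → ℝ := (1 / 2 : ℝ) • (wi - wj) with hdi
  have esum : (A i - B i * K k + A j - B j * K k) *ᵥ x = wi + wj := by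
    rw [show A i - B i * K k + A j - B j * K k
        = (A i - B i * K k) + (A j - B j * K k) from by abel, add_mulVec]
  have ediff : (A i - B i * K k - A j + B j * K k) *ᵥ x = wi - wj := by
    rw [show A i - B i * K k - A j + B j * K k
        = (A i - B i * K k) - (A j - B j * K k) from by abel, sub_mulVec]
  have h1 := hPik i j k x
  rw [esum, ediff, ← hsi, ← hdi] at h1
  have h2 := quadmax γ hγ (P i j) (hP i j) (hPγ i j) si v
  have hpol : (wi - v) ⬝ᵥ (wi - v) + (wj - v) ⬝ᵥ (wj - v)
      = 2 * ((si - v) ⬝ᵥ (si - v)) + 2 * (di ⬝ᵥ di) := by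
    have e1 : wi - v = (si - v) + di := by rw [hsi, hdi]; module
    have e2 : wj - v = (si - v) - di := by rw [hsi, hdi]; module
    rw [e1, e2]
    simp only [add_dotProduct, dotProduct_add, sub_dotProduct, dotProduct_sub,
      dotProduct_comm di (si - v)]
    ring
  have hpol' : γ ^ 2 * ((wi - v) ⬝ᵥ (wi - v)) + γ ^ 2 * ((wj - v) ⬝ᵥ (wj - v))
      = 2 * (γ ^ 2 * ((si - v) ⬝ᵥ (si - v))) + 2 * (γ ^ 2 * (di ⬝ᵥ di)) := by
    linear_combination γ ^ 2 * hpol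
  linarith [h1, h2, hpol', hmin j]
end
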